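/- Let f : {0,1}^n → {0,1} be symmetric and let ρ(f) = |{i ∈ {0,...,n−2} : f(i) ≠ f(i+2)}| (where f(i) denotes the common value on weight-i inputs). Then signmon(f) ≤ (n+2)^{ρ(f)}, where signmon is the sign monomial complexity. -/

import Mathlib

def wt {n : ℕ} (x : Fin n → Bool) : ℕ :=
  (Finset.univ.filter fun i => x i = true).card

noncomputable def chi {n : ℕ} (S : Finset (Fin n)) (x : Fin n → Bool) : ℝ :=
  (-1 : ℝ) ^ (S.filter fun i => x i = true).card

noncomputable def fc {n : ℕ} (g : (Fin n → Bool) → ℝ) (S : Finset (Fin n)) : ℝ :=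
  (∑ x : Fin n → Bool, g x * chi S x) / 2 ^ n

noncomputable def mon {n : ℕ} (g : (Fin n → Bool) → ℝ) : ℕ :=
  Nat.card {S : Finset (Fin n) // fc g S ≠ 0}

def signRep {n : ℕ} (p : (Fin n → Bool) → ℝ) (f : (Fin n → Bool) → Bool) : Prop :=
  ∀ x, if f x then 0 < p x else p x < 0

noncomputable def signMon {n : ℕ} (f : (Fin n → Bool) → Bool) : ℕ :=
  sInf {m | ∃ p : (Fin n → Bool) → ℝ, signRep p f ∧ mon p = m}

lemma chi_prod {n : ℕ} (S : Finset (Fin n)) (x : Fin n → Bool) :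
    chi S x = ∏ i : Fin n, (if i ∈ S then (if x i = true then (-1:ℝ) else 1) else 1) := by
  have h1 : chi S x = ∏ i ∈ S, (if x i = true then (-1:ℝ) else 1) := by
    rw [chi, ← Finset.prod_const, ← Finset.prod_filter]
  rw [h1, Finset.prod_ite_mem, Finset.univ_inter]

lemma sum_chi_mul_chi {n : ℕ} (S T : Finset (Fin n)) :
    ∑ x : Fin n → Bool, chi S x * chi T x = if S = T then (2:ℝ)^n else 0 := by
  classical
  set F : Fin n → Bool → ℝ := fun i b =>
    ((if i ∈ S then (if b = true then (-1:ℝ) else 1) else 1) *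
      (if i ∈ T then (if b = true then (-1:ℝ) else 1) else 1)) with hF
  have h : ∀ x : Fin n → Bool, chi S x * chi T x = ∏ i : Fin n, F i (x i) := by
    intro x
    rw [chi_prod, chi_prod, Finset.prod_mul_distrib]
  simp_rw [h]
  rw [← Fintype.piFinset_univ, ← Finset.prod_univ_sum]
  by_cases hST : S = T
  · subst hST
    rw [if_pos rfl]
    have : ∀ i : Fin n, (∑ b ∈ (Finset.univ : Finset Bool), F i b) = 2 := by
      intro i
      rw [Fintype.sum_bool]
      by_cases hi : i ∈ S <;> norm_num [hF, hi]
    rw [Finset.prod_congr rfl (fun i _ => this i), Finset.prod_const, Finset.card_univ,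
      Fintype.card_fin]
  · rw [if_neg hST]
    have : ∃ i : Fin n, ¬(i ∈ S ↔ i ∈ T) := by
      by_contra hc
      push_neg at hc
      exact hST (Finset.ext fun i => (hc i))
    obtain ⟨i, hi⟩ := this
    refine Finset.prod_eq_zero (Finset.mem_univ i) ?_
    rw [Fintype.sum_bool]
    by_cases h1 : i ∈ S <;> by_cases h2 : i ∈ T <;> simp [hF, h1, h2] at hi ⊢

lemma chi_mul {n : ℕ} (S T : Finset (Fin n)) (x : Fin n → Bool) :
    chi S x * chi T x = chi (symmDiff S T) x := by
  classical
  rw [chi_prod, chi_prod, chi_prod, ← Finset.prod_mul_distrib]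
  refine Finset.prod_congr rfl fun i _ => ?_
  by_cases hS : i ∈ S <;> by_cases hT : i ∈ T <;> cases hx : x i <;>
    norm_num [Finset.mem_symmDiff, hS, hT, hx]

def suppIn {n : ℕ} (A : Finset (Finset (Fin n))) (p : (Fin n → Bool) → ℝ) : Prop :=
  ∃ c : Finset (Fin n) → ℝ, ∀ x, p x = ∑ S ∈ A, c S * chi S x

lemma fc_eq_zero {n : ℕ} {A : Finset (Finset (Fin n))} {p : (Fin n → Bool) → ℝ}
    (h : suppIn A p) {T : Finset (Fin n)} (hT : T ∉ A) : fc p T = 0 := by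
  obtain ⟨c, hc⟩ := h
  have : ∑ x : Fin n → Bool, p x * chi T x = 0 := by
    simp_rw [hc, Finset.sum_mul]
    rw [Finset.sum_comm]
    refine Finset.sum_eq_zero fun S hS => ?_
    have hne : S ≠ T := fun h => hT (h ▸ hS)
    simp_rw [mul_assoc, ← Finset.mul_sum]
    rw [sum_chi_mul_chi, if_neg hne, mul_zero]
  rw [fc, this, zero_div]

lemma mon_le_of_suppIn {n : ℕ} {A : Finset (Finset (Fin n))} {p : (Fin n → Bool) → ℝ}
    (h : suppIn A p) : mon p ≤ A.card := by
  have hsub : {S : Finset (Fin n) | fc p S ≠ 0} ⊆ (A : Set (Finset (Fin n))) := by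
    intro S hS
    by_contra hS'
    exact hS (fc_eq_zero h hS')
  calc mon p = {S : Finset (Fin n) | fc p S ≠ 0}.ncard := Nat.card_coe_set_eq _
    _ ≤ A.card := by
        rw [← Set.ncard_coe_finset]
        exact Set.ncard_le_ncard hsub A.finite_toSet

lemma suppIn_mul {n : ℕ} {A B : Finset (Finset (Fin n))} {p q : (Fin n → Bool) → ℝ}
    (hp : suppIn A p) (hq : suppIn B q) :
    suppIn ((A ×ˢ B).image fun z => symmDiff z.1 z.2) (fun x => p x * q x) := by
  classical
  obtain ⟨c, hc⟩ := hp
  obtain ⟨d, hd⟩ := hq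
  refine ⟨fun T => ∑ z ∈ (A ×ˢ B).filter (fun z => symmDiff z.1 z.2 = T), c z.1 * d z.2,
    fun x => ?_⟩
  show p x * q x = _
  have key : ∀ T ∈ (A ×ˢ B).image fun z => symmDiff z.1 z.2,
      (∑ z ∈ (A ×ˢ B).filter (fun z => symmDiff z.1 z.2 = T), c z.1 * d z.2) * chi T x
      = ∑ z ∈ (A ×ˢ B).filter (fun z => symmDiff z.1 z.2 = T),
          (c z.1 * chi z.1 x) * (d z.2 * chi z.2 x) := by
    intro T _
    rw [Finset.sum_mul]
    refine Finset.sum_congr rfl fun z hz => ?_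
    have hzT : symmDiff z.1 z.2 = T := (Finset.mem_filter.mp hz).2
    rw [← hzT, ← chi_mul]
    ring
  rw [Finset.sum_congr rfl key,
    Finset.sum_fiberwise_of_maps_to (fun z hz => Finset.mem_image_of_mem _ hz),
    Finset.sum_product, hc, hd, Finset.sum_mul_sum]

lemma wt_le {n : ℕ} (x : Fin n → Bool) : wt x ≤ n := by
  have := Finset.card_filter_le Finset.univ (fun i => x i = true)
  simpa [wt] using this

lemma chi_empty {n : ℕ} (x : Fin n → Bool) : chi (∅ : Finset (Fin n)) x = 1 := by
  simp [chi]

lemma chi_univ {n : ℕ} (x : Fin n → Bool) :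
    chi (Finset.univ : Finset (Fin n)) x = if wt x % 2 = 0 then 1 else -1 := by
  have h : chi (Finset.univ : Finset (Fin n)) x = (-1:ℝ) ^ (wt x) := rfl
  rw [h]
  rcases Nat.even_or_odd (wt x) with he | ho
  · rw [he.neg_one_pow, if_pos (Nat.even_iff.mp he)]
  · rw [ho.neg_one_pow, if_neg]
    rw [Nat.odd_iff] at ho
    omega

lemma chi_singleton {n : ℕ} (i : Fin n) (x : Fin n → Bool) :
    chi {i} x = if x i = true then (-1:ℝ) else 1 := by
  cases hx : x i <;> simp [chi, Finset.filter_singleton, hx]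

noncomputable def pBase (n : ℕ) (g : ℕ → Bool) : (Fin n → Bool) → ℝ :=
  fun x => (if g 0 then (1:ℝ) else -1) * chi (if g 0 = g 1 then ∅ else Finset.univ) x

lemma pBase_eq (n : ℕ) (g : ℕ → Bool) (x : Fin n → Bool) :
    pBase n g x = (if g (wt x % 2) then (1:ℝ) else -1) := by
  have h2 : wt x % 2 = 0 ∨ wt x % 2 = 1 := Nat.mod_two_eq_zero_or_one _
  by_cases h01 : g 0 = g 1
  · rw [pBase, if_pos h01, chi_empty, mul_one]
    rcases h2 with h | h <;> rw [h]
    rw [← h01]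
  · rw [pBase, if_neg h01, chi_univ]
    rcases h2 with h | h <;> rw [h] <;>
      cases hg0 : g 0 <;> cases hg1 : g 1 <;> simp_all

noncomputable def pStep (n t : ℕ) : (Fin n → Bool) → ℝ :=
  fun x => ((n:ℝ) + 2*t + 3)/2 - (wt x : ℝ)
    + (if t % 2 = 0 then -(((n:ℝ)+1)/2) else ((n:ℝ)+1)/2) * chi Finset.univ x

lemma pStep_sign {n t : ℕ} (x : Fin n → Bool) :
    if t + 2 ≤ wt x ∧ wt x % 2 = t % 2 then pStep n t x < 0 else 0 < pStep n t x := by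
  have hk : wt x ≤ n := wt_le x
  have hkR : (wt x : ℝ) ≤ n := Nat.cast_le.mpr hk
  rw [pStep, chi_univ]
  by_cases hpar : wt x % 2 = t % 2
  · have hγ : (if t % 2 = 0 then -(((n:ℝ)+1)/2) else ((n:ℝ)+1)/2) *
        (if wt x % 2 = 0 then (1:ℝ) else -1) = -(((n:ℝ)+1)/2) := by
      rcases Nat.mod_two_eq_zero_or_one t with h | h <;>
        simp [h, hpar.trans h]
    rw [hγ]
    by_cases hle : t + 2 ≤ wt x
    · rw [if_pos ⟨hle, hpar⟩]
      have : (t:ℝ) + 2 ≤ (wt x : ℝ) := by exact_mod_cast hle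
      linarith
    · rw [if_neg (fun h => hle h.1)]
      have hkt : wt x ≤ t := by omega
      have : (wt x : ℝ) ≤ (t : ℝ) := Nat.cast_le.mpr hkt
      linarith
  · have hγ : (if t % 2 = 0 then -(((n:ℝ)+1)/2) else ((n:ℝ)+1)/2) *
        (if wt x % 2 = 0 then (1:ℝ) else -1) = ((n:ℝ)+1)/2 := by
      rcases Nat.mod_two_eq_zero_or_one t with h | h <;>
        rcases Nat.mod_two_eq_zero_or_one (wt x) with h' | h' <;>
        simp_all
    rw [hγ, if_neg (by tauto)]
    have : (0:ℝ) ≤ t := Nat.cast_nonneg t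
    linarith

lemma sum_chi_singleton {n : ℕ} (x : Fin n → Bool) :
    ∑ i : Fin n, chi {i} x = (n:ℝ) - 2 * (wt x : ℝ) := by
  have h : ∀ i : Fin n, chi {i} x = 1 - 2 * (if x i = true then (1:ℝ) else 0) := by
    intro i
    rw [chi_singleton]
    cases hx : x i <;> norm_num
  rw [Finset.sum_congr rfl fun i _ => h i, Finset.sum_sub_distrib, Finset.sum_const,
    Finset.card_univ, Fintype.card_fin, ← Finset.mul_sum, Finset.sum_boole]
  simp [wt]

def stepSupp (n : ℕ) : Finset (Finset (Fin n)) :=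
  insert ∅ (insert Finset.univ (Finset.univ.image fun i : Fin n => ({i} : Finset (Fin n))))

lemma stepSupp_card (n : ℕ) : (stepSupp n).card ≤ n + 2 := by
  refine le_trans (Finset.card_insert_le _ _) ?_
  have : (insert Finset.univ (Finset.univ.image fun i : Fin n => ({i} : Finset (Fin n)))).card
      ≤ n + 1 := by
    refine le_trans (Finset.card_insert_le _ _) ?_
    have := Finset.card_image_le (s := (Finset.univ : Finset (Fin n)))
      (f := fun i : Fin n => ({i} : Finset (Fin n)))
    simp only [Finset.card_univ, Fintype.card_fin] at this
    omega
  omega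

lemma pStep_suppIn {n : ℕ} (t : ℕ) (hn : 2 ≤ n) : suppIn (stepSupp n) (pStep n t) := by
  classical
  have hne : (Finset.univ : Finset (Fin n)).Nonempty := by
    have : Nonempty (Fin n) := ⟨⟨0, by omega⟩⟩
    exact Finset.univ_nonempty
  refine ⟨fun S => if S = ∅ then ((n:ℝ) + 2*t + 3)/2 - (n:ℝ)/2
    else if S = Finset.univ then (if t % 2 = 0 then -(((n:ℝ)+1)/2) else ((n:ℝ)+1)/2)
    else 1/2, fun x => ?_⟩
  have hEmp : (∅ : Finset (Fin n)) ∉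
      insert Finset.univ (Finset.univ.image fun i : Fin n => ({i} : Finset (Fin n))) := by
    simp only [Finset.mem_insert, Finset.mem_image, Finset.mem_univ, true_and]
    push_neg
    exact ⟨fun h => hne.ne_empty h.symm, fun i => Finset.singleton_nonempty i⟩
  have huniv : (Finset.univ : Finset (Fin n)) ∉
      (Finset.univ.image fun i : Fin n => ({i} : Finset (Fin n))) := by
    simp only [Finset.mem_image, Finset.mem_univ, true_and]
    rintro ⟨i, hi⟩
    have := congrArg Finset.card hi
    simp only [Finset.card_singleton, Finset.card_univ, Fintype.card_fin] at this
    omega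
  rw [stepSupp, Finset.sum_insert hEmp, Finset.sum_insert huniv]
  simp only []
  rw [if_pos trivial, if_neg hne.ne_empty, if_pos trivial, Finset.sum_image (fun i _ j _ h =>
      Finset.singleton_injective h)]
  have hc : ∀ i : Fin n, (if ({i} : Finset (Fin n)) = ∅ then ((n:ℝ) + 2*t + 3)/2 - (n:ℝ)/2
      else if ({i} : Finset (Fin n)) = Finset.univ
        then (if t % 2 = 0 then -(((n:ℝ)+1)/2) else ((n:ℝ)+1)/2)
      else 1/2) = 1/2 := by
    intro i
    rw [if_neg (Finset.singleton_ne_empty i), if_neg]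
    intro h
    have := congrArg Finset.card h
    simp only [Finset.card_singleton, Finset.card_univ, Fintype.card_fin] at this
    omega
  simp_rw [hc]
  rw [chi_empty, mul_one]
  have hsum : ∑ i : Fin n, (1/2 : ℝ) * chi {i} x = (1/2) * ((n:ℝ) - 2 * (wt x : ℝ)) := by
    rw [← Finset.mul_sum, sum_chi_singleton]
  rw [hsum, pStep]
  ring

lemma key_id (n : ℕ) (g : ℕ → Bool) : ∀ k, k ≤ n →
    (if g k then (1:ℝ) else -1)
      = (if g (k % 2) then (1:ℝ) else -1) *
        ∏ t ∈ (Finset.range (n-1)).filter (fun i => g i ≠ g (i+2)),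
          (if t + 2 ≤ k ∧ k % 2 = t % 2 then (-1:ℝ) else 1) := by
  classical
  intro k
  induction k using Nat.strong_induction_on with
  | _ k ih =>
    intro hk
    by_cases hk2 : k < 2
    · have hmod : k % 2 = k := Nat.mod_eq_of_lt hk2
      have hone : ∀ t ∈ (Finset.range (n-1)).filter (fun i => g i ≠ g (i+2)),
          (if t + 2 ≤ k ∧ k % 2 = t % 2 then (-1:ℝ) else 1) = 1 := by
        intro t _
        rw [if_neg (by omega)]
      rw [Finset.prod_congr rfl hone, Finset.prod_const_one, mul_one, hmod]
    · obtain ⟨m, rfl⟩ : ∃ m, k = m + 2 := ⟨k - 2, by omega⟩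
      have hmn : m ≤ n := by omega
      have hIH := ih m (by omega) hmn
      set C := (Finset.range (n-1)).filter (fun i => g i ≠ g (i+2)) with hCdef
      have hmem : m ∈ C ↔ g m ≠ g (m + 2) := by
        rw [hCdef, Finset.mem_filter, Finset.mem_range]
        constructor
        · exact fun h => h.2
        · exact fun h => ⟨by omega, h⟩
      have hstep : ∀ t ∈ C, (if t + 2 ≤ m + 2 ∧ (m+2) % 2 = t % 2 then (-1:ℝ) else 1)
          = (if t + 2 ≤ m ∧ m % 2 = t % 2 then (-1:ℝ) else 1)
            * (if t = m then (-1:ℝ) else 1) := by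
        intro t _
        by_cases htm : t = m
        · subst htm
          rw [if_pos ⟨le_refl _, by omega⟩, if_neg (by omega), if_pos rfl, one_mul]
        · rw [if_neg htm, mul_one]
          have hiff : (t + 2 ≤ m + 2 ∧ (m+2) % 2 = t % 2) ↔ (t + 2 ≤ m ∧ m % 2 = t % 2) := by
            omega
          by_cases h1 : t + 2 ≤ m + 2 ∧ (m+2) % 2 = t % 2
          · rw [if_pos h1, if_pos (hiff.mp h1)]
          · rw [if_neg h1, if_neg (fun h => h1 (hiff.mpr h))]
      rw [Finset.prod_congr rfl hstep, Finset.prod_mul_distrib, Finset.prod_ite_eq' C m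
        (fun _ => (-1:ℝ))]
      have hm2 : (m + 2) % 2 = m % 2 := by omega
      rw [hm2, ← mul_assoc, ← hIH]
      by_cases hgm : g m = g (m + 2)
      · rw [if_neg (fun h => (hmem.mp h) hgm), mul_one, hgm]
      · rw [if_pos (hmem.mpr hgm)]
        cases h1 : g m <;> cases h2 : g (m+2)
        · exact absurd (h1.trans h2.symm) hgm
        · norm_num
        · norm_num
        · exact absurd (h1.trans h2.symm) hgm

theorem signMon_le_of_symmetric {n : ℕ} (g : ℕ → Bool)
    (f : (Fin n → Bool) → Bool) (hf : ∀ x, f x = g (wt x)) :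
    signMon f ≤ (n + 2) ^ ((Finset.range (n - 1)).filter fun i => g i ≠ g (i + 2)).card := by
  classical
  set C := (Finset.range (n - 1)).filter fun i => g i ≠ g (i + 2) with hCdef
  have hDlt : ∀ t ∈ C, t < n - 1 := fun t ht => Finset.mem_range.mp (Finset.mem_filter.mp ht).1
  have hprod : ∀ (D : Finset ℕ), (∀ t ∈ D, t < n - 1) →
      ∃ A : Finset (Finset (Fin n)), suppIn A (fun x => ∏ t ∈ D, pStep n t x) ∧
        A.card ≤ (n + 2) ^ D.card := by
    intro D
    induction D using Finset.cons_induction with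
    | empty =>
      intro _
      exact ⟨{∅}, ⟨fun _ => 1, fun x => by simp [chi_empty]⟩, by simp⟩
    | cons a s ha ih =>
      intro hD
      obtain ⟨A, hA, hcard⟩ := ih (fun t ht => hD t (Finset.mem_cons_of_mem ht))
      have hn2 : 2 ≤ n := by
        have := hD a (Finset.mem_cons_self a s)
        omega
      have hmul := suppIn_mul (pStep_suppIn a hn2) hA
      refine ⟨(stepSupp n ×ˢ A).image fun z => symmDiff z.1 z.2, ?_, ?_⟩
      · obtain ⟨c, hc⟩ := hmul
        refine ⟨c, fun x => ?_⟩
        show ∏ t ∈ Finset.cons a s ha, pStep n t x = _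
        rw [Finset.prod_cons]
        exact hc x
      · calc ((stepSupp n ×ˢ A).image fun z => symmDiff z.1 z.2).card
            ≤ (stepSupp n ×ˢ A).card := Finset.card_image_le
          _ = (stepSupp n).card * A.card := Finset.card_product _ _
          _ ≤ (n + 2) * (n + 2) ^ s.card := Nat.mul_le_mul (stepSupp_card n) hcard
          _ = (n + 2) ^ (Finset.cons a s ha).card := by
              rw [Finset.card_cons, pow_succ]
              ring
  obtain ⟨A, hA, hcard⟩ := hprod C hDlt
  have hsuppP : suppIn (({(if g 0 = g 1 then (∅ : Finset (Fin n)) else Finset.univ)} ×ˢ A).image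
      fun z => symmDiff z.1 z.2) (fun x => pBase n g x * ∏ t ∈ C, pStep n t x) :=
    suppIn_mul ⟨fun _ => (if g 0 then (1:ℝ) else -1), fun x => by
      rw [Finset.sum_singleton]; rfl⟩ hA
  have hmonP : mon (fun x => pBase n g x * ∏ t ∈ C, pStep n t x) ≤ (n + 2) ^ C.card := by
    refine le_trans (mon_le_of_suppIn hsuppP) ?_
    calc (({(if g 0 = g 1 then (∅ : Finset (Fin n)) else Finset.univ)} ×ˢ A).image
          fun z => symmDiff z.1 z.2).card
        ≤ ({(if g 0 = g 1 then (∅ : Finset (Fin n)) else Finset.univ)} ×ˢ A).card :=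
          Finset.card_image_le
      _ = A.card := by rw [Finset.card_product, Finset.card_singleton, one_mul]
      _ ≤ (n + 2) ^ C.card := hcard
  have hsign : signRep (fun x => pBase n g x * ∏ t ∈ C, pStep n t x) f := by
    intro x
    show if f x then 0 < pBase n g x * ∏ t ∈ C, pStep n t x
      else pBase n g x * ∏ t ∈ C, pStep n t x < 0
    have hk : wt x ≤ n := wt_le x
    have hF := key_id n g (wt x) hk
    rw [← hCdef] at hF
    have hpos : 0 < (pBase n g x * ∏ t ∈ C, pStep n t x) *
        (if g (wt x) then (1:ℝ) else -1) := by
      rw [hF]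
      have h1 : pBase n g x * (if g (wt x % 2) then (1:ℝ) else -1) = 1 := by
        rw [pBase_eq]
        cases hb : g (wt x % 2) <;> norm_num
      have h2 : 0 < ∏ t ∈ C, (pStep n t x *
          (if t + 2 ≤ wt x ∧ wt x % 2 = t % 2 then (-1:ℝ) else 1)) := by
        refine Finset.prod_pos fun t _ => ?_
        have hs := pStep_sign (n := n) (t := t) x
        by_cases hc : t + 2 ≤ wt x ∧ wt x % 2 = t % 2
        · rw [if_pos hc] at hs ⊢
          nlinarith
        · rw [if_neg hc] at hs ⊢
          nlinarith
      have hre : (pBase n g x * ∏ t ∈ C, pStep n t x) *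
          ((if g (wt x % 2) then (1:ℝ) else -1) *
            ∏ t ∈ C, (if t + 2 ≤ wt x ∧ wt x % 2 = t % 2 then (-1:ℝ) else 1))
          = (pBase n g x * (if g (wt x % 2) then (1:ℝ) else -1)) *
            ((∏ t ∈ C, pStep n t x) *
              ∏ t ∈ C, (if t + 2 ≤ wt x ∧ wt x % 2 = t % 2 then (-1:ℝ) else 1)) :=
        mul_mul_mul_comm _ _ _ _
      rw [hre, h1, one_mul, ← Finset.prod_mul_distrib]
      exact h2
    rw [hf x]
    cases hgk : g (wt x)
    · rw [hgk, if_neg Bool.false_ne_true] at hpos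
      rw [if_neg Bool.false_ne_true]
      linarith
    · rw [hgk, if_pos rfl] at hpos
      rw [if_pos rfl]
      linarith
  exact le_trans (Nat.sInf_le ⟨_, hsign, rfl⟩) hmonP
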